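/- For every γ̄ > 0 and every g_u ≥ 0, the integral ∫₀^{g_u} log₂(1 + γ̄ g) e^{−g} dg equals (e^{1/γ̄} / ln 2) · (E₁(1/γ̄) − E₁(1/γ̄ + g_u)) − e^{−g_u} log₂(1 + γ̄ g_u). -/

import Mathlib

open MeasureTheory Real

/-- The exponential integral function `E₁(z) = ∫_z^∞ e^{−t}/t dt`. -/
noncomputable def expInt (z : ℝ) : ℝ := ∫ t in Set.Ioi z, Real.exp (-t) / t

lemma expInt_integrableOn {a : ℝ} (ha : 0 < a) :
    IntegrableOn (fun t : ℝ => Real.exp (-t) / t) (Set.Ioi a) := by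
  have hmeas : AEStronglyMeasurable (fun t : ℝ => Real.exp (-t) / t)
      (volume.restrict (Set.Ioi a)) := by
    apply ContinuousOn.aestronglyMeasurable _ measurableSet_Ioi
    apply ContinuousOn.div (Continuous.continuousOn (by continuity)) continuousOn_id
    intro t ht
    exact ne_of_gt (lt_trans ha ht)
  have hint : IntegrableOn (fun t : ℝ => Real.exp (-1 * t) / a) (Set.Ioi a) :=
    (exp_neg_integrableOn_Ioi a one_pos).div_const a
  refine Integrable.mono hint hmeas ?_
  filter_upwards [ae_restrict_mem measurableSet_Ioi] with t ht
  have hta : a < t := ht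
  have ht0 : 0 < t := lt_trans ha hta
  rw [Real.norm_eq_abs, Real.norm_eq_abs, abs_of_pos (by positivity),
    abs_of_pos (by positivity), neg_one_mul]
  exact div_le_div_of_nonneg_left (Real.exp_pos _).le ha hta.le

lemma expInt_sub {a b : ℝ} (ha : 0 < a) (hab : a ≤ b) :
    expInt a - expInt b = ∫ t in a..b, Real.exp (-t) / t := by
  have hb : 0 < b := lt_of_lt_of_le ha hab
  have hIoi : IntegrableOn (fun t : ℝ => Real.exp (-t) / t) (Set.Ioi a) :=
    expInt_integrableOn ha
  have h1 : IntegrableOn (fun t : ℝ => Real.exp (-t) / t) (Set.Ioc a b) :=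
    hIoi.mono_set Set.Ioc_subset_Ioi_self
  have h2 : IntegrableOn (fun t : ℝ => Real.exp (-t) / t) (Set.Ioi b) :=
    expInt_integrableOn hb
  have hsplit : expInt a = (∫ t in Set.Ioc a b, Real.exp (-t) / t) + expInt b := by
    unfold expInt
    rw [← Set.Ioc_union_Ioi_eq_Ioi hab,
      setIntegral_union (Set.Ioc_disjoint_Ioi le_rfl) measurableSet_Ioi h1 h2]
  rw [hsplit, intervalIntegral.integral_of_le hab, add_sub_cancel_right]

/-- Closed-form ergodic throughput of the PHAT-IP scheme (Theorem 1). -/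
theorem phat_ip_ergodic_throughput (γ : ℝ) (hγ : 0 < γ) (gu : ℝ) (hgu : 0 ≤ gu) :
    ∫ g in (0:ℝ)..gu, Real.logb 2 (1 + γ * g) * Real.exp (-g)
      = Real.exp (1 / γ) / Real.log 2 * (expInt (1 / γ) - expInt (1 / γ + gu))
        - Real.exp (-gu) * Real.logb 2 (1 + γ * gu) := by
  have hγi : 0 < 1 / γ := by positivity
  have hlog2 : (0:ℝ) < Real.log 2 := Real.log_pos (by norm_num)
  have hpos : ∀ x ∈ Set.uIcc (0:ℝ) gu, 0 < 1 + γ * x := by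
    intro x hx
    rw [Set.uIcc_of_le hgu] at hx
    nlinarith [hx.1]
  have hu : ∀ x ∈ Set.uIcc (0:ℝ) gu,
      HasDerivAt (fun g => Real.logb 2 (1 + γ * g)) (γ / ((1 + γ * x) * Real.log 2)) x := by
    intro x hx
    have h1 : HasDerivAt (fun g : ℝ => 1 + γ * g) γ x := by
      simpa using ((hasDerivAt_id x).const_mul γ).const_add 1
    have h2 := (h1.log (ne_of_gt (hpos x hx))).div_const (Real.log 2)
    simp only [Real.logb]
    exact h2.congr_deriv (div_div _ _ _)
  have hv : ∀ x ∈ Set.uIcc (0:ℝ) gu,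
      HasDerivAt (fun g : ℝ => -Real.exp (-g)) (Real.exp (-x)) x := by
    intro x _
    have := (Real.hasDerivAt_exp (-x)).comp x ((hasDerivAt_id x).neg)
    exact this.neg.congr_deriv (by simp)
  have hu' : IntervalIntegrable (fun x => γ / ((1 + γ * x) * Real.log 2)) volume 0 gu := by
    apply ContinuousOn.intervalIntegrable
    apply ContinuousOn.div continuousOn_const
    · exact ContinuousOn.mul (Continuous.continuousOn (by continuity)) continuousOn_const
    · intro x hx
      exact ne_of_gt (mul_pos (hpos x hx) hlog2)
  have hv' : IntervalIntegrable (fun x : ℝ => Real.exp (-x)) volume 0 gu :=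
    (Continuous.continuousOn (by continuity)).intervalIntegrable
  have hparts := intervalIntegral.integral_mul_deriv_eq_deriv_mul hu hv hu' hv'
  simp only [mul_zero, neg_zero, Real.exp_zero] at hparts
  have hsub : (∫ x in (0:ℝ)..gu, γ / ((1 + γ * x) * Real.log 2) * -Real.exp (-x))
      = -(Real.exp (1 / γ) / Real.log 2 * ∫ t in (1/γ)..(1/γ + gu), Real.exp (-t) / t) := by
    have hshift := intervalIntegral.integral_comp_add_right (a := (0:ℝ)) (b := gu)
      (fun t => Real.exp (-t) / t) (1/γ)
    rw [zero_add, add_comm gu (1/γ)] at hshift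
    rw [← hshift, ← intervalIntegral.integral_const_mul, ← intervalIntegral.integral_neg]
    apply intervalIntegral.integral_congr
    intro x hx
    have hx1 : 0 < 1 + γ * x := hpos x hx
    have h1x : (1 + γ * x) ≠ 0 := ne_of_gt hx1
    have hden : (x + 1/γ) ≠ 0 := by
      intro h
      have : γ * (x + 1/γ) = 1 + γ * x := by field_simp; ring
      rw [h, mul_zero] at this; linarith
    have he2 : Real.exp (-(x + 1/γ)) = Real.exp (-x) * Real.exp (-(1/γ)) := by
      rw [← Real.exp_add]; ring_nf
    simp only []
    rw [he2, Real.exp_neg (1/γ)]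
    have hexp : Real.exp (1/γ) ≠ 0 := (Real.exp_pos _).ne'
    have hgx : 1 + γ * x = γ * (x + 1/γ) := by field_simp; ring
    rw [hgx]
    field_simp
  rw [hparts, hsub, ← expInt_sub hγi (by linarith)]
  simp only [show (1:ℝ) + 0 = 1 by norm_num, Real.logb_one]
  ring
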